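/- arXiv:math/0512524 — 4 statements merged into one kernel-verified Lean document; each statement's English description precedes it below -/
import Mathlib

section
/- Let U be a sub-Markovian resolvent of kernels and ξ a purely excessive measure (ξ U-excessive with inf_{α>0} ξ∘αU_α = 0). Then for every β>0, setting ξ' = ξ − ξ∘βU_β, one has ξ = ξ'∘(I + βU), where U is the initial kernel sup_{α>0} U_α. -/
open MeasureTheory ProbabilityTheory ENNReal Set Filter

variable {E : Type*} [MeasurableSpace E]

/-- The action of the kernel `U α` on nonnegative measurable functions. -/
noncomputable def resOp (U : ℝ → ProbabilityTheory.Kernel E E) (α : ℝ)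
    (f : E → ℝ≥0∞) (x : E) : ℝ≥0∞ := ∫⁻ y, f y ∂(U α x)

/-- A sub-Markovian resolvent of kernels: `α U_α 1 ≤ 1` and the resolvent equation
`U_α = U_β + (β-α) U_α U_β` for `0 < α ≤ β`. -/
def IsSubMarkovResolvent (U : ℝ → ProbabilityTheory.Kernel E E) : Prop :=
  (∀ α : ℝ, 0 < α → ∀ x : E, ENNReal.ofReal α * (U α x) Set.univ ≤ 1) ∧
  (∀ α β : ℝ, 0 < α → α ≤ β → ∀ f : E → ℝ≥0∞, Measurable f → ∀ x : E,
    resOp U α f x = resOp U β f x + ENNReal.ofReal (β - α) * resOp U α (resOp U β f) x)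

/-- The initial kernel `U = sup_{α>0} U_α` acting on functions. -/
noncomputable def iniOp (U : ℝ → ProbabilityTheory.Kernel E E) (f : E → ℝ≥0∞) (x : E) : ℝ≥0∞ :=
  ⨆ (α : ℝ) (_ : 0 < α), resOp U α f x

/-- `s` is `U`-supermedian: `α U_α s ≤ s` for all `α > 0`. -/
def IsSupermedian (U : ℝ → ProbabilityTheory.Kernel E E) (s : E → ℝ≥0∞) : Prop :=
  ∀ α : ℝ, 0 < α → ∀ x, ENNReal.ofReal α * resOp U α s x ≤ s x

/-- The regularization `ŝ(x) = sup_{α>0} α U_α s (x)`. -/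
noncomputable def hatOp (U : ℝ → ProbabilityTheory.Kernel E E) (s : E → ℝ≥0∞) (x : E) : ℝ≥0∞ :=
  ⨆ (α : ℝ) (_ : 0 < α), ENNReal.ofReal α * resOp U α s x

/-- `s` is `U`-excessive: supermedian and `sup_{α>0} α U_α s = s`. -/
def IsExcessiveFn (U : ℝ → ProbabilityTheory.Kernel E E) (s : E → ℝ≥0∞) : Prop :=
  IsSupermedian U s ∧ ∀ x, hatOp U s x = s x

/-- The shifted resolvent `U_β = (U_{β+α})_{α>0}`. -/
def shiftRes (U : ℝ → ProbabilityTheory.Kernel E E) (β : ℝ) :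
    ℝ → ProbabilityTheory.Kernel E E := fun α => U (β + α)

/-- `ξ` is a `U`-excessive measure: `ξ ∘ (α U_α) ≤ ξ` for all `α > 0`. -/
def IsExcessiveMeas (U : ℝ → ProbabilityTheory.Kernel E E) (ξ : Measure E) : Prop :=
  ∀ α : ℝ, 0 < α → ENNReal.ofReal α • ξ.bind (U α) ≤ ξ

/-- The measure `μ ∘ U`, where `U` is the initial kernel `sup_{α>0} U_α`. -/
noncomputable def potMeas (U : ℝ → ProbabilityTheory.Kernel E E) (μ : Measure E) : Measure E :=
  ⨆ (α : ℝ) (_ : 0 < α), μ.bind (U α)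

/-- `ξ` is purely excessive: excessive and `inf_{α>0} ξ ∘ (α U_α) = 0`. -/
def IsPurelyExcessiveMeas (U : ℝ → ProbabilityTheory.Kernel E E) (ξ : Measure E) : Prop :=
  IsExcessiveMeas U ξ ∧ ∀ s : Set E, MeasurableSet s →
    (⨅ (α : ℝ) (_ : 0 < α), (ENNReal.ofReal α • ξ.bind (U α)) s) = 0

/-- The set of non-branch points with respect to `U`. -/
def nonBranch (U : ℝ → ProbabilityTheory.Kernel E E) : Set E :=
  {x | (∀ s t : E → ℝ≥0∞, IsExcessiveFn U s → IsExcessiveFn U t →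
      hatOp U (fun y => min (s y) (t y)) x = min (s x) (t x)) ∧
    hatOp U (fun _ => (1 : ℝ≥0∞)) x = 1}

section Aux
variable {U : ℝ → ProbabilityTheory.Kernel E E}

lemma resOp_measurable {α : ℝ} {f : E → ℝ≥0∞} (hf : Measurable f) :
    Measurable (resOp U α f) :=
  (Measure.measurable_lintegral hf).comp (U α).measurable

lemma resOp_le_bound (hU : IsSubMarkovResolvent U) {α : ℝ} (hα : 0 < α)
    {f : E → ℝ≥0∞} {C : ℝ≥0∞} (hf : ∀ x, f x ≤ C) (x : E) :
    resOp U α f x ≤ C * (ENNReal.ofReal α)⁻¹ := by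
  have h1 : resOp U α f x ≤ C * (U α x) univ := by
    calc resOp U α f x ≤ ∫⁻ _, C ∂(U α x) := lintegral_mono fun y => hf y
    _ = C * (U α x) univ := lintegral_const C
  refine h1.trans (mul_le_mul_right ?_ C)
  rw [ENNReal.le_inv_iff_mul_le, mul_comm]
  exact hU.1 α hα x

lemma resOp_eq_iSup_sum (hU : IsSubMarkovResolvent U) {a b : ℝ} (ha : 0 < a) (hab : a ≤ b)
    {C : ℝ≥0∞} (hC : C ≠ ∞) (g : ℕ → E → ℝ≥0∞) (hg0m : Measurable (g 0))
    (hg0b : ∀ x, g 0 x ≤ C) (hgs : ∀ n, g (n + 1) = resOp U b (g n)) (x : E) :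
    resOp U a (g 0) x
      = ⨆ n, ∑ k ∈ Finset.range n, ENNReal.ofReal (b - a) ^ k * g (k + 1) x := by
  have hb : 0 < b := ha.trans_le hab
  have hb0 : ENNReal.ofReal b ≠ 0 := (ENNReal.ofReal_pos.2 hb).ne'
  set c := ENNReal.ofReal (b - a) with hc
  have hmeas : ∀ n, Measurable (g n) := by
    intro n; induction n with
    | zero => exact hg0m
    | succ n ih => rw [hgs n]; exact resOp_measurable ih
  have hbd : ∀ n x, g n x ≤ C * ((ENNReal.ofReal b)⁻¹) ^ n := by
    intro n; induction n with
    | zero => intro y; simpa using hg0b y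
    | succ n ih =>
      intro y
      rw [hgs n, pow_succ, ← mul_assoc]
      exact resOp_le_bound hU hb ih y
  have key : ∀ n, resOp U a (g 0) x
      = (∑ k ∈ Finset.range n, c ^ k * g (k + 1) x) + c ^ n * resOp U a (g n) x := by
    intro n; induction n with
    | zero => simp
    | succ n ih =>
      rw [ih, Finset.sum_range_succ]
      have h2 := hU.2 a b ha hab (g n) (hmeas n) x
      rw [← hgs n, ← hc] at h2
      rw [h2]; ring
  have hrem : Tendsto (fun n => c ^ n * resOp U a (g n) x) atTop (nhds 0) := by
    set r := c * (ENNReal.ofReal b)⁻¹ with hr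
    have hrlt : r < 1 := by
      have h1 : c < ENNReal.ofReal b := by
        rw [hc, ENNReal.ofReal_lt_ofReal_iff hb]; linarith
      calc r < ENNReal.ofReal b * (ENNReal.ofReal b)⁻¹ :=
            ENNReal.mul_lt_mul_left (ENNReal.inv_ne_zero.2 ENNReal.ofReal_ne_top)
              (ENNReal.inv_ne_top.2 hb0) h1
      _ = 1 := ENNReal.mul_inv_cancel hb0 ENNReal.ofReal_ne_top
    have hK : C * (ENNReal.ofReal a)⁻¹ ≠ ∞ :=
      ENNReal.mul_ne_top hC (ENNReal.inv_ne_top.2 (ENNReal.ofReal_pos.2 ha).ne')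
    have hub : ∀ n, c ^ n * resOp U a (g n) x ≤ C * (ENNReal.ofReal a)⁻¹ * r ^ n := by
      intro n
      calc c ^ n * resOp U a (g n) x
          ≤ c ^ n * (C * ((ENNReal.ofReal b)⁻¹) ^ n * (ENNReal.ofReal a)⁻¹) :=
            mul_le_mul_right (resOp_le_bound hU ha (hbd n) x) _
      _ = C * (ENNReal.ofReal a)⁻¹ * r ^ n := by rw [hr, mul_pow]; ring
    have hlim : Tendsto (fun n => C * (ENNReal.ofReal a)⁻¹ * r ^ n) atTop (nhds 0) := by
      have := ENNReal.Tendsto.const_mul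
        (ENNReal.tendsto_pow_atTop_nhds_zero_of_lt_one hrlt) (Or.inr hK)
      simpa using this
    exact tendsto_of_tendsto_of_tendsto_of_le_of_le tendsto_const_nhds hlim
      (fun n => zero_le) hub
  refine le_antisymm ?_ (iSup_le fun n => by rw [key n]; exact le_self_add)
  have hT : Tendsto
      (fun n => (⨆ m, ∑ k ∈ Finset.range m, c ^ k * g (k + 1) x) + c ^ n * resOp U a (g n) x)
      atTop (nhds ((⨆ m, ∑ k ∈ Finset.range m, c ^ k * g (k + 1) x) + 0)) :=
    tendsto_const_nhds.add hrem
  rw [add_zero] at hT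
  refine ge_of_tendsto' hT fun n => ?_
  rw [key n]
  exact add_le_add (le_iSup (fun m => ∑ k ∈ Finset.range m, c ^ k * g (k + 1) x) n) le_rfl


lemma resOp_comm (hU : IsSubMarkovResolvent U) {a b : ℝ} (ha : 0 < a) (hab : a ≤ b)
    {f : E → ℝ≥0∞} (hf : Measurable f) (hfb : ∀ x, f x ≤ 1) (x : E) :
    resOp U a (resOp U b f) x = resOp U b (resOp U a f) x := by
  have hb : 0 < b := ha.trans_le hab
  have hb0 : ENNReal.ofReal b ≠ 0 := (ENNReal.ofReal_pos.2 hb).ne'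
  set c := ENNReal.ofReal (b - a) with hc
  set g : ℕ → E → ℝ≥0∞ := fun n => (fun h => resOp U b h)^[n] f with hg
  have hg0 : g 0 = f := rfl
  have hgs : ∀ n, g (n + 1) = resOp U b (g n) := fun n => Function.iterate_succ_apply' _ n f
  have hmeas : ∀ n, Measurable (g n) := by
    intro n; induction n with
    | zero => exact hf
    | succ n ih => rw [hgs n]; exact resOp_measurable ih
  have hg1b : ∀ y, g 1 y ≤ (ENNReal.ofReal b)⁻¹ := by
    intro y
    have := resOp_le_bound hU hb (C := 1) hfb y
    rw [one_mul] at this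
    rw [hgs 0, hg0]; exact this
  -- series for resOp U a (g 1)
  have hL : resOp U a (g 1) x = ⨆ n, ∑ k ∈ Finset.range n, c ^ k * g (k + 2) x := by
    have := resOp_eq_iSup_sum hU ha hab (C := (ENNReal.ofReal b)⁻¹)
      (ENNReal.inv_ne_top.2 hb0) (fun n => g (n + 1)) (hmeas 1) hg1b
      (fun n => hgs (n + 1)) x
    simpa using this
  -- pointwise series for resOp U a f
  have hS : ∀ y, resOp U a f y = ⨆ n, ∑ k ∈ Finset.range n, c ^ k * g (k + 1) y := by
    intro y
    have := resOp_eq_iSup_sum hU ha hab (C := 1) one_ne_top g hf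
      (by rw [hg0]; exact hfb) hgs y
    rw [hg0] at this; exact this
  have hR : resOp U b (resOp U a f) x = ⨆ n, ∑ k ∈ Finset.range n, c ^ k * g (k + 2) x := by
    have hSmeas : ∀ n, Measurable fun y => ∑ k ∈ Finset.range n, c ^ k * g (k + 1) y :=
      fun n => Finset.measurable_sum _ fun k _ => (hmeas (k + 1)).const_mul _
    have hSmono : Monotone fun n => fun y => ∑ k ∈ Finset.range n, c ^ k * g (k + 1) y := by
      intro m n hmn y
      exact Finset.sum_le_sum_of_subset (Finset.range_subset_range.2 hmn)
    calc resOp U b (resOp U a f) x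
        = ∫⁻ y, ⨆ n, ∑ k ∈ Finset.range n, c ^ k * g (k + 1) y ∂(U b x) := by
          unfold resOp; exact lintegral_congr fun y => hS y
    _ = ⨆ n, ∫⁻ y, ∑ k ∈ Finset.range n, c ^ k * g (k + 1) y ∂(U b x) :=
          lintegral_iSup hSmeas hSmono
    _ = ⨆ n, ∑ k ∈ Finset.range n, c ^ k * g (k + 2) x := by
          refine iSup_congr fun n => ?_
          rw [lintegral_finset_sum _ fun k _ => (hmeas (k + 1)).const_mul _]
          refine Finset.sum_congr rfl fun k _ => ?_
          rw [lintegral_const_mul _ (hmeas (k + 1))]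
          congr 1
          exact (hgs (k + 1)).symm ▸ rfl
  rw [show resOp U b f = g 1 from (hgs 0).symm ▸ congrArg _ hg0.symm] at *
  rw [hL, hR]

set_option linter.unusedSectionVars false in
lemma indicator_le_one' {s : Set E} (x : E) : s.indicator (1 : E → ℝ≥0∞) x ≤ 1 := by
  by_cases hx : x ∈ s <;> simp [Set.indicator, hx]

lemma bind_apply_eq {a : ℝ} (μ : Measure E) {s : Set E} (hs : MeasurableSet s) :
    (μ.bind (U a)) s = ∫⁻ x, resOp U a (s.indicator 1) x ∂μ := by
  rw [Measure.bind_apply hs (U a).measurable.aemeasurable]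
  exact lintegral_congr fun x => (lintegral_indicator_one hs).symm

lemma bind_bind_apply_eq {a b : ℝ} (μ : Measure E) {s : Set E} (hs : MeasurableSet s) :
    ((μ.bind (U b)).bind (U a)) s
      = ∫⁻ x, resOp U b (resOp U a (s.indicator 1)) x ∂μ := by
  have hind : Measurable (s.indicator (1 : E → ℝ≥0∞)) := measurable_one.indicator hs
  rw [bind_apply_eq _ hs, Measure.lintegral_bind (U b).measurable.aemeasurable (resOp_measurable hind).aemeasurable]
  rfl

lemma bind_res (hU : IsSubMarkovResolvent U) {a b : ℝ} (ha : 0 < a) (hab : a ≤ b)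
    (μ : Measure E) {s : Set E} (hs : MeasurableSet s) :
    (μ.bind (U a)) s = (μ.bind (U b)) s
      + ENNReal.ofReal (b - a) * ((μ.bind (U b)).bind (U a)) s := by
  have hind : Measurable (s.indicator (1 : E → ℝ≥0∞)) := measurable_one.indicator hs
  rw [bind_apply_eq _ hs, bind_apply_eq _ hs, bind_bind_apply_eq _ hs]
  have hpt : ∀ x, resOp U a (s.indicator 1) x
      = resOp U b (s.indicator 1) x
        + ENNReal.ofReal (b - a) * resOp U b (resOp U a (s.indicator 1)) x := by
    intro x
    rw [hU.2 a b ha hab _ hind x, resOp_comm hU ha hab hind indicator_le_one' x]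
  rw [lintegral_congr hpt, lintegral_add_left (resOp_measurable hind),
    lintegral_const_mul _ (resOp_measurable (resOp_measurable hind))]

lemma bind_antitone_apply (hU : IsSubMarkovResolvent U) {a b : ℝ} (ha : 0 < a) (hab : a ≤ b)
    (μ : Measure E) {s : Set E} (hs : MeasurableSet s) :
    (μ.bind (U b)) s ≤ (μ.bind (U a)) s := by
  rw [bind_res hU ha hab μ hs]; exact le_self_add

lemma bind_bind_comm_apply (hU : IsSubMarkovResolvent U) {a b : ℝ} (ha : 0 < a) (hab : a ≤ b)
    (μ : Measure E) {s : Set E} (hs : MeasurableSet s) :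
    ((μ.bind (U b)).bind (U a)) s = ((μ.bind (U a)).bind (U b)) s := by
  have hind : Measurable (s.indicator (1 : E → ℝ≥0∞)) := measurable_one.indicator hs
  rw [bind_bind_apply_eq _ hs, bind_bind_apply_eq _ hs]
  exact lintegral_congr fun x => (resOp_comm hU ha hab hind indicator_le_one' x).symm

lemma bind_mono_apply {a : ℝ} {μ ν : Measure E} (h : μ ≤ ν) {s : Set E}
    (hs : MeasurableSet s) : (μ.bind (U a)) s ≤ (ν.bind (U a)) s := by
  rw [Measure.bind_apply hs (U a).measurable.aemeasurable, Measure.bind_apply hs (U a).measurable.aemeasurable]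
  exact lintegral_mono' h le_rfl

lemma bind_add_apply {a : ℝ} (μ ν : Measure E) {s : Set E} (hs : MeasurableSet s) :
    ((μ + ν).bind (U a)) s = (μ.bind (U a)) s + (ν.bind (U a)) s := by
  simp [Measure.bind_apply hs (U a).measurable.aemeasurable, lintegral_add_measure]

lemma bind_smul_apply {a : ℝ} (r : ℝ≥0∞) (μ : Measure E) {s : Set E} (hs : MeasurableSet s) :
    ((r • μ).bind (U a)) s = r * (μ.bind (U a)) s := by
  simp [Measure.bind_apply hs (U a).measurable.aemeasurable, lintegral_smul_measure]

end Aux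

section Aux2
variable {E : Type*} [MeasurableSpace E]

lemma sub_add_cancel_of_le_sigmaFinite {ξ m : Measure E} [SigmaFinite ξ] (h : m ≤ ξ) :
    ξ - m + m = ξ := by
  ext s hs
  have hmono : Monotone fun n => s ∩ spanningSets ξ n := fun i j hij =>
    inter_subset_inter_right s (monotone_spanningSets ξ hij)
  have hu : ⋃ n, s ∩ spanningSets ξ n = s := by
    rw [← inter_iUnion, iUnion_spanningSets, inter_univ]
  have hd : Directed (· ⊆ ·) fun n => s ∩ spanningSets ξ n := hmono.directed_le
  have key : ∀ n, (ξ - m + m) (s ∩ spanningSets ξ n) = ξ (s ∩ spanningSets ξ n) := by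
    intro n
    set t := spanningSets ξ n with ht
    have htm : MeasurableSet t := measurableSet_spanningSets ξ n
    haveI hfin : IsFiniteMeasure (m.restrict t) := ⟨by
      rw [Measure.restrict_apply_univ]
      exact lt_of_le_of_lt (Measure.le_iff'.1 h t) (measure_spanningSets_lt_top ξ n)⟩
    have hle : m.restrict t ≤ ξ.restrict t := Measure.restrict_mono subset_rfl h
    have hsm : MeasurableSet (s ∩ t) := hs.inter htm
    have h1 : (ξ - m) (s ∩ t) = ξ (s ∩ t) - m (s ∩ t) := by
      calc (ξ - m) (s ∩ t) = ((ξ - m).restrict t) s := by rw [Measure.restrict_apply hs]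
      _ = (ξ.restrict t - m.restrict t) s := by
            rw [Measure.restrict_sub_eq_restrict_sub_restrict htm]
      _ = ξ.restrict t s - m.restrict t s := Measure.sub_apply hs hle
      _ = ξ (s ∩ t) - m (s ∩ t) := by
            rw [Measure.restrict_apply hs, Measure.restrict_apply hs]
    rw [Measure.add_apply, h1, tsub_add_cancel_of_le (Measure.le_iff'.1 h (s ∩ t))]
  calc (ξ - m + m) s = (ξ - m + m) (⋃ n, s ∩ spanningSets ξ n) := by rw [hu]
  _ = ⨆ n, (ξ - m + m) (s ∩ spanningSets ξ n) := hd.measure_iUnion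
  _ = ⨆ n, ξ (s ∩ spanningSets ξ n) := by exact iSup_congr key
  _ = ξ (⋃ n, s ∩ spanningSets ξ n) := hd.measure_iUnion.symm
  _ = ξ s := by rw [hu]

lemma iSup_apply_of_directed {ι : Type*} [Nonempty ι] (μ : ι → Measure E)
    (hd : Directed (· ≤ ·) μ) {s : Set E} (hs : MeasurableSet s) :
    (⨆ i, μ i) s = ⨆ i, μ i s := by
  set ν : Measure E := Measure.ofMeasurable (fun t _ => ⨆ i, μ i t) (by simp)
    (by
      intro f hf hdisj
      have h1 : ∀ i : ι, μ i (⋃ n, f n) = ∑' n, μ i (f n) := fun i =>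
        measure_iUnion hdisj hf
      simp_rw [h1]
      rw [eq_comm]
      have h2 : ∀ F : Finset ℕ, ∑ n ∈ F, ⨆ i, μ i (f n) = ⨆ i, ∑ n ∈ F, μ i (f n) := by
        intro F
        refine ENNReal.finsetSum_iSup fun i j => ?_
        obtain ⟨k, hik, hjk⟩ := hd i j
        exact ⟨k, fun n => ⟨Measure.le_iff'.1 hik _, Measure.le_iff'.1 hjk _⟩⟩
      rw [ENNReal.tsum_eq_iSup_sum]
      simp_rw [h2]
      rw [iSup_comm]
      exact iSup_congr fun i => ENNReal.tsum_eq_iSup_sum.symm) with hν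
  have hub : ∀ i, μ i ≤ ν := by
    intro i
    refine Measure.le_iff.2 fun t ht => ?_
    rw [hν, Measure.ofMeasurable_apply t ht]
    exact le_iSup (fun i => μ i t) i
  refine le_antisymm ?_ (iSup_le fun i => Measure.le_iff'.1 (le_iSup μ i) s)
  calc (⨆ i, μ i) s ≤ ν s := Measure.le_iff'.1 (iSup_le hub) s
  _ = ⨆ i, μ i s := Measure.ofMeasurable_apply s hs

end Aux2

section Aux3
variable {E : Type*} [MeasurableSpace E] {U : ℝ → ProbabilityTheory.Kernel E E}

lemma claimA (hU : IsSubMarkovResolvent U) (ξ : Measure E) (hexc : IsExcessiveMeas U ξ)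
    {β : ℝ} {a : ℝ} (ha : 0 < a) (hab : a ≤ β)
    (ν : Measure E) (hsum : ν + (ENNReal.ofReal β • ξ.bind (U β)) = ξ)
    {s : Set E} (hs : MeasurableSet s) (hfin : ξ s ≠ ∞) :
    ν s + ENNReal.ofReal (β - a) * (ν.bind (U a)) s
      + ENNReal.ofReal a * (ξ.bind (U a)) s = ξ s := by
  set m := ENNReal.ofReal β • ξ.bind (U β) with hm
  set c := ENNReal.ofReal (β - a) with hc
  have hξa_fin : (ξ.bind (U a)) s ≠ ∞ := by
    have h1 := Measure.le_iff'.1 (hexc a ha) s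
    rw [Measure.smul_apply, smul_eq_mul] at h1
    intro hinf
    rw [hinf, ENNReal.mul_top (ENNReal.ofReal_pos.2 ha).ne'] at h1
    exact hfin (top_le_iff.1 h1)
  have hmle : m ≤ ξ := hsum ▸ Measure.le_add_left le_rfl
  have hma_fin : (m.bind (U a)) s ≠ ∞ :=
    ne_top_of_le_ne_top hξa_fin (bind_mono_apply hmle hs)
  have hκ : c * (m.bind (U a)) s ≠ ∞ := ENNReal.mul_ne_top ENNReal.ofReal_ne_top hma_fin
  have hi : (ν.bind (U a)) s + (m.bind (U a)) s = (ξ.bind (U a)) s := by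
    rw [← bind_add_apply ν m hs, hsum]
  have hii := bind_res hU ha hab ξ hs
  have hiii : (m.bind (U a)) s = ENNReal.ofReal β * ((ξ.bind (U β)).bind (U a)) s :=
    bind_smul_apply _ _ hs
  have hca : c + ENNReal.ofReal a = ENNReal.ofReal β := by
    rw [hc, ← ENNReal.ofReal_add (by linarith) ha.le]
    congr 1; ring
  refine (ENNReal.add_left_inj hκ).1 ?_
  calc ν s + c * (ν.bind (U a)) s + ENNReal.ofReal a * (ξ.bind (U a)) s + c * (m.bind (U a)) s
      = ν s + c * ((ν.bind (U a)) s + (m.bind (U a)) s)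
        + ENNReal.ofReal a * (ξ.bind (U a)) s := by ring
    _ = ν s + (c + ENNReal.ofReal a) * (ξ.bind (U a)) s := by rw [hi]; ring
    _ = ν s + ENNReal.ofReal β * (ξ.bind (U a)) s := by rw [hca]
    _ = ν s + ENNReal.ofReal β
          * ((ξ.bind (U β)) s + c * ((ξ.bind (U β)).bind (U a)) s) := by rw [← hii]
    _ = ν s + ENNReal.ofReal β * (ξ.bind (U β)) s
          + c * (ENNReal.ofReal β * ((ξ.bind (U β)).bind (U a)) s) := by ring
    _ = ν s + m s + c * (m.bind (U a)) s := by
          rw [hiii, hm, Measure.smul_apply, smul_eq_mul]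
    _ = ξ s + c * (m.bind (U a)) s := by rw [← hsum, Measure.add_apply]

lemma alpha_bind_mono (hU : IsSubMarkovResolvent U) (ξ : Measure E)
    (hexc : IsExcessiveMeas U ξ) {a b : ℝ} (ha : 0 < a) (hab : a ≤ b)
    {s : Set E} (hs : MeasurableSet s) :
    ENNReal.ofReal a * (ξ.bind (U a)) s ≤ ENNReal.ofReal b * (ξ.bind (U b)) s := by
  have key : ENNReal.ofReal a * ((ξ.bind (U b)).bind (U a)) s ≤ (ξ.bind (U b)) s := by
    rw [bind_bind_comm_apply hU ha hab ξ hs]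
    calc ENNReal.ofReal a * ((ξ.bind (U a)).bind (U b)) s
        = ((ENNReal.ofReal a • ξ.bind (U a)).bind (U b)) s := (bind_smul_apply _ _ hs).symm
      _ ≤ (ξ.bind (U b)) s := bind_mono_apply (hexc a ha) hs
  have hadd : ENNReal.ofReal a + ENNReal.ofReal (b - a) = ENNReal.ofReal b := by
    rw [← ENNReal.ofReal_add ha.le (by linarith)]; congr 1; ring
  calc ENNReal.ofReal a * (ξ.bind (U a)) s
      = ENNReal.ofReal a * (ξ.bind (U b)) s
        + ENNReal.ofReal (b - a)
          * (ENNReal.ofReal a * ((ξ.bind (U b)).bind (U a)) s) := by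
        rw [bind_res hU ha hab ξ hs]; ring
    _ ≤ ENNReal.ofReal a * (ξ.bind (U b)) s
        + ENNReal.ofReal (b - a) * (ξ.bind (U b)) s :=
        add_le_add_right (mul_le_mul_right key _) _
    _ = ENNReal.ofReal b * (ξ.bind (U b)) s := by rw [← add_mul, hadd]

end Aux3

/-- if `ξ` is purely excessive and `β > 0`, then with
`ξ' = ξ - ξ∘βU_β` one has `ξ = ξ'∘(I + βU)`, `U` being the initial kernel. -/
theorem purelyExcessive_decomposition
    (U : ℝ → ProbabilityTheory.Kernel E E) (hU : IsSubMarkovResolvent U)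
    (ξ : Measure E) [SigmaFinite ξ] (hξ : IsPurelyExcessiveMeas U ξ)
    (β : ℝ) (hβ : 0 < β) :
    ξ = (ξ - ENNReal.ofReal β • ξ.bind (U β))
        + ENNReal.ofReal β • potMeas U (ξ - ENNReal.ofReal β • ξ.bind (U β)) := by
  obtain ⟨hexc, hinf⟩ := hξ
  set m := ENNReal.ofReal β • ξ.bind (U β) with hm
  set ν := ξ - m with hν
  have hmle : m ≤ ξ := hexc β hβ
  have hsum : ν + m = ξ := sub_add_cancel_of_le_sigmaFinite hmle
  have hνle : ν ≤ ξ := Measure.sub_le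
  -- potMeas applied to sets
  have hpot : ∀ {s : Set E}, MeasurableSet s →
      potMeas U ν s = ⨆ p : {a : ℝ // 0 < a}, (ν.bind (U p.1)) s := by
    intro s hs
    have h1 : potMeas U ν = ⨆ p : {a : ℝ // 0 < a}, ν.bind (U p.1) := by
      rw [potMeas]; exact iSup_subtype'
    rw [h1]
    haveI : Nonempty {a : ℝ // 0 < a} := ⟨⟨1, one_pos⟩⟩
    refine iSup_apply_of_directed _ (fun p q => ?_) hs
    refine ⟨⟨min p.1 q.1, lt_min p.2 q.2⟩, ?_, ?_⟩
    · exact Measure.le_iff.2 fun t ht =>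
        bind_antitone_apply hU (lt_min p.2 q.2) (min_le_left _ _) ν ht
    · exact Measure.le_iff.2 fun t ht =>
        bind_antitone_apply hU (lt_min p.2 q.2) (min_le_right _ _) ν ht
  -- the equality on sets of finite ξ-measure
  have main : ∀ t : Set E, MeasurableSet t → ξ t ≠ ∞ →
      ξ t = ν t + ENNReal.ofReal β * potMeas U ν t := by
    intro t ht htfin
    haveI : Nonempty {a : ℝ // 0 < a} := ⟨⟨1, one_pos⟩⟩
    refine le_antisymm ?_ ?_
    · -- ξ t ≤ K using the infimum condition
      set K := ν t + ENNReal.ofReal β * potMeas U ν t with hK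
      have hle : ∀ a : ℝ, 0 < a → ξ t ≤ K + (ENNReal.ofReal a • ξ.bind (U a)) t := by
        intro a ha
        set a' := min a β with ha'def
        have ha' : 0 < a' := lt_min ha hβ
        have ha'β : a' ≤ β := min_le_right _ _
        have ha'a : a' ≤ a := min_le_left _ _
        have hA := claimA hU ξ hexc ha' ha'β ν hsum ht htfin
        rw [← hA]
        have h1 : ENNReal.ofReal (β - a') * (ν.bind (U a')) t
            ≤ ENNReal.ofReal β * potMeas U ν t := by
          refine mul_le_mul' (ENNReal.ofReal_le_ofReal (by linarith)) ?_
          rw [hpot ht]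
          exact le_iSup (fun p : {a : ℝ // 0 < a} => (ν.bind (U p.1)) t) ⟨a', ha'⟩
        have h2 : ENNReal.ofReal a' * (ξ.bind (U a')) t
            ≤ (ENNReal.ofReal a • ξ.bind (U a)) t := by
          rw [Measure.smul_apply, smul_eq_mul]
          exact alpha_bind_mono hU ξ hexc ha' ha'a ht
        calc ν t + ENNReal.ofReal (β - a') * (ν.bind (U a')) t
              + ENNReal.ofReal a' * (ξ.bind (U a')) t
            ≤ ν t + ENNReal.ofReal β * potMeas U ν t
              + (ENNReal.ofReal a • ξ.bind (U a)) t := by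
              exact add_le_add (add_le_add le_rfl h1) h2
          _ = K + (ENNReal.ofReal a • ξ.bind (U a)) t := by rw [hK]
      calc ξ t ≤ ⨅ (a : ℝ) (_ : 0 < a), (K + (ENNReal.ofReal a • ξ.bind (U a)) t) :=
            le_iInf fun a => le_iInf fun ha => hle a ha
        _ = K + ⨅ (a : ℝ) (_ : 0 < a), (ENNReal.ofReal a • ξ.bind (U a)) t := by
            rw [ENNReal.add_iInf]
            exact iInf_congr fun a => by rw [ENNReal.add_iInf]
        _ = K := by rw [hinf t ht, add_zero]
    · -- K ≤ ξ t
      rw [hpot ht, ENNReal.mul_iSup, ENNReal.add_iSup]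
      refine iSup_le fun p => ?_
      obtain ⟨a, ha⟩ := p
      set a' := min a β with ha'def
      have ha' : 0 < a' := lt_min ha hβ
      have ha'β : a' ≤ β := min_le_right _ _
      have ha'a : a' ≤ a := min_le_left _ _
      have hanti : (ν.bind (U a)) t ≤ (ν.bind (U a')) t :=
        bind_antitone_apply hU ha' ha'a ν ht
      have hadd : ENNReal.ofReal (β - a') + ENNReal.ofReal a' = ENNReal.ofReal β := by
        rw [← ENNReal.ofReal_add (by linarith) ha'.le]; congr 1; ring
      have hA := claimA hU ξ hexc ha' ha'β ν hsum ht htfin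
      calc ν t + ENNReal.ofReal β * (ν.bind (U a)) t
          ≤ ν t + ENNReal.ofReal β * (ν.bind (U a')) t :=
            add_le_add_right (mul_le_mul_right hanti _) _
        _ = ν t + ENNReal.ofReal (β - a') * (ν.bind (U a')) t
            + ENNReal.ofReal a' * (ν.bind (U a')) t := by rw [← hadd]; ring
        _ ≤ ν t + ENNReal.ofReal (β - a') * (ν.bind (U a')) t
            + ENNReal.ofReal a' * (ξ.bind (U a')) t :=
            add_le_add_right (mul_le_mul_right (bind_mono_apply hνle ht) _) _
        _ = ξ t := hA
  -- extend to all measurable sets via spanning sets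
  ext s hs
  have hmono : Monotone fun n => s ∩ spanningSets ξ n := fun i j hij =>
    inter_subset_inter_right s (monotone_spanningSets ξ hij)
  have hd : Directed (· ⊆ ·) fun n => s ∩ spanningSets ξ n := hmono.directed_le
  have hu : ⋃ n, s ∩ spanningSets ξ n = s := by
    rw [← inter_iUnion, iUnion_spanningSets, inter_univ]
  have key : ∀ n, ξ (s ∩ spanningSets ξ n)
      = (ν + ENNReal.ofReal β • potMeas U ν) (s ∩ spanningSets ξ n) := by
    intro n
    have htm : MeasurableSet (s ∩ spanningSets ξ n) :=
      hs.inter (measurableSet_spanningSets ξ n)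
    have hfin : ξ (s ∩ spanningSets ξ n) ≠ ∞ :=
      (lt_of_le_of_lt (measure_mono inter_subset_right)
        (measure_spanningSets_lt_top ξ n)).ne
    rw [main _ htm hfin, Measure.add_apply, Measure.smul_apply, smul_eq_mul]
  calc ξ s = ξ (⋃ n, s ∩ spanningSets ξ n) := by rw [hu]
    _ = ⨆ n, ξ (s ∩ spanningSets ξ n) := hd.measure_iUnion
    _ = ⨆ n, (ν + ENNReal.ofReal β • potMeas U ν) (s ∩ spanningSets ξ n) := iSup_congr key
    _ = (ν + ENNReal.ofReal β • potMeas U ν) (⋃ n, s ∩ spanningSets ξ n) :=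
        hd.measure_iUnion.symm
    _ = (ν + ENNReal.ofReal β • potMeas U ν) s := by rw [hu]
end

section
/- Let U be a sub-Markovian resolvent of kernels, β>0, and ξ, η two U-excessive measures with ξ purely excessive. If ξ − ξ∘βU_β ≤ η − η∘βU_β (as positive measures), then ξ ≤ η. -/
open MeasureTheory ProbabilityTheory ENNReal Set Filter

variable {E : Type*} [MeasurableSpace E]

lemma auxPED_bind_apply (κ : ProbabilityTheory.Kernel E E) (μ : Measure E) {s : Set E}
    (hs : MeasurableSet s) : μ.bind κ s = ∫⁻ x, κ x s ∂μ :=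
  Measure.bind_apply hs κ.measurable.aemeasurable

lemma auxPED_bind_mono (κ : ProbabilityTheory.Kernel E E) {μ ν : Measure E} (h : μ ≤ ν) :
    μ.bind κ ≤ ν.bind κ := by
  refine Measure.le_iff.2 fun s hs => ?_
  rw [auxPED_bind_apply κ μ hs, auxPED_bind_apply κ ν hs]
  exact lintegral_mono' h le_rfl

lemma auxPED_bind_add (κ : ProbabilityTheory.Kernel E E) (μ ν : Measure E) :
    (μ + ν).bind κ = μ.bind κ + ν.bind κ := by
  ext s hs
  rw [Measure.add_apply, auxPED_bind_apply κ _ hs, auxPED_bind_apply κ _ hs,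
    auxPED_bind_apply κ _ hs, lintegral_add_measure]

lemma auxPED_bind_smul (κ : ProbabilityTheory.Kernel E E) (c : ℝ≥0∞) (μ : Measure E) :
    (c • μ).bind κ = c • μ.bind κ := by
  ext s hs
  rw [Measure.smul_apply, smul_eq_mul, auxPED_bind_apply κ _ hs, auxPED_bind_apply κ _ hs,
    lintegral_smul_measure, smul_eq_mul]

lemma auxPED_smul_mono (c : ℝ≥0∞) {μ ν : Measure E} (h : μ ≤ ν) : c • μ ≤ c • ν := by
  refine Measure.le_iff.2 fun s hs => ?_
  simp only [Measure.smul_apply, smul_eq_mul]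
  exact mul_le_mul_right (Measure.le_iff'.1 h s) c

lemma auxPED_bind_sum (κ : ProbabilityTheory.Kernel E E) {ι : Type*} (t : Finset ι)
    (μ : ι → Measure E) : (∑ k ∈ t, μ k).bind κ = ∑ k ∈ t, (μ k).bind κ := by
  classical
  induction t using Finset.induction_on with
  | empty => simp [Measure.bind_zero_left]
  | insert _ _ hk ih =>
      rw [Finset.sum_insert hk, Finset.sum_insert hk, auxPED_bind_add, ih]

lemma auxPED_sub_add_cancel {μ ν : Measure E} [SigmaFinite μ] (h : ν ≤ μ) : μ - ν + ν = μ := by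
  ext s hs
  have hdir : Directed (· ⊆ ·) (fun n => s ∩ spanningSets μ n) :=
    (Monotone.directed_le fun m n hmn =>
      inter_subset_inter_right s (monotone_spanningSets μ hmn))
  have hsup : ∀ ρ : Measure E, ρ s = ⨆ n, ρ (s ∩ spanningSets μ n) := by
    intro ρ
    conv_lhs => rw [← inter_univ s, ← iUnion_spanningSets μ, inter_iUnion]
    exact hdir.measure_iUnion
  have key : ∀ n, (μ - ν) (s ∩ spanningSets μ n) + ν (s ∩ spanningSets μ n)
      = μ (s ∩ spanningSets μ n) := by
    intro n
    set t := spanningSets μ n with ht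
    have hmt : MeasurableSet t := measurableSet_spanningSets μ n
    have hresle : ν.restrict t ≤ μ.restrict t := Measure.restrict_mono (Subset.refl _) h
    have : IsFiniteMeasure (ν.restrict t) := by
      refine ⟨?_⟩
      rw [Measure.restrict_apply_univ]
      exact (Measure.le_iff'.1 h t).trans_lt (measure_spanningSets_lt_top μ n)
    have e1 : (μ - ν) (s ∩ t) = μ (s ∩ t) - ν (s ∩ t) := by
      rw [← Measure.restrict_apply hs (μ := μ - ν),
        Measure.restrict_sub_eq_restrict_sub_restrict hmt,
        Measure.sub_apply hs hresle, Measure.restrict_apply hs, Measure.restrict_apply hs]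
    rw [e1, tsub_add_cancel_of_le (Measure.le_iff'.1 h _)]
  rw [Measure.add_apply, hsup (μ - ν), hsup ν, hsup μ,
    ENNReal.iSup_add_iSup_of_monotone (fun m n hmn => measure_mono
      (inter_subset_inter_right s (monotone_spanningSets μ hmn)))
      (fun m n hmn => measure_mono (inter_subset_inter_right s (monotone_spanningSets μ hmn)))]
  exact iSup_congr key

lemma auxPED_resolvent (U : ℝ → ProbabilityTheory.Kernel E E) (hU : IsSubMarkovResolvent U)
    {α β : ℝ} (hα : 0 < α) (hαβ : α ≤ β) (μ : Measure E) :
    μ.bind (U α) = μ.bind (U β) + ENNReal.ofReal (β - α) • (μ.bind (U α)).bind (U β) := by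
  ext s hs
  have hf : Measurable (s.indicator fun _ => (1 : ℝ≥0∞)) := measurable_const.indicator hs
  have h1 : ∀ (γ : ℝ) (x : E), resOp U γ (s.indicator fun _ => (1 : ℝ≥0∞)) x = (U γ x) s := by
    intro γ x
    simp [resOp, lintegral_indicator hs]
  have key : ∀ x : E, (U α x) s
      = (U β x) s + ENNReal.ofReal (β - α) * ∫⁻ y, (U β y) s ∂(U α x) := by
    intro x
    have h2 := hU.2 α β hα hαβ _ hf x
    rw [h1 α x, h1 β x] at h2
    have h3 : resOp U α (resOp U β (s.indicator fun _ => (1 : ℝ≥0∞))) x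
        = ∫⁻ y, (U β y) s ∂(U α x) := lintegral_congr fun y => h1 β y
    rw [h3] at h2
    exact h2
  rw [Measure.add_apply, Measure.smul_apply, smul_eq_mul,
    auxPED_bind_apply (U α) μ hs, auxPED_bind_apply (U β) μ hs,
    auxPED_bind_apply (U β) _ hs,
    Measure.lintegral_bind (U α).measurable.aemeasurable ((U β).measurable_coe hs).aemeasurable]
  calc ∫⁻ x, (U α x) s ∂μ
      = ∫⁻ x, ((U β x) s + ENNReal.ofReal (β - α) * ∫⁻ y, (U β y) s ∂(U α x)) ∂μ :=
        lintegral_congr key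
    _ = (∫⁻ x, (U β x) s ∂μ)
        + ENNReal.ofReal (β - α) * ∫⁻ x, ∫⁻ y, (U β y) s ∂(U α x) ∂μ := by
        have hg : Measurable fun x => ∫⁻ y, (U β y) s ∂(U α x) :=
          (Measure.measurable_lintegral ((U β).measurable_coe hs)).comp (U α).measurable
        rw [lintegral_add_left ((U β).measurable_coe hs), lintegral_const_mul _ hg]

lemma auxPED_alpha_mono (U : ℝ → ProbabilityTheory.Kernel E E) (hU : IsSubMarkovResolvent U)
    {α γ : ℝ} (hα : 0 < α) (hαγ : α ≤ γ) (ξ : Measure E)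
    (hexc : ENNReal.ofReal α • ξ.bind (U α) ≤ ξ) :
    ENNReal.ofReal α • ξ.bind (U α) ≤ ENNReal.ofReal γ • ξ.bind (U γ) := by
  have hres := auxPED_resolvent U hU hα hαγ ξ
  calc ENNReal.ofReal α • ξ.bind (U α)
      = ENNReal.ofReal α • ξ.bind (U γ)
        + ENNReal.ofReal (γ - α) • ((ENNReal.ofReal α • ξ.bind (U α)).bind (U γ)) := by
        conv_rhs => rw [auxPED_bind_smul,
          smul_comm (ENNReal.ofReal (γ - α)) (ENNReal.ofReal α)]
        rw [← smul_add, ← hres]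
    _ ≤ ENNReal.ofReal α • ξ.bind (U γ) + ENNReal.ofReal (γ - α) • ξ.bind (U γ) :=
        add_le_add le_rfl (auxPED_smul_mono _ (auxPED_bind_mono _ hexc))
    _ = ENNReal.ofReal γ • ξ.bind (U γ) := by
        rw [← add_smul, ← ENNReal.ofReal_add hα.le (sub_nonneg.2 hαγ), add_sub_cancel]

lemma auxPED_geom_bound (U : ℝ → ProbabilityTheory.Kernel E E) (hU : IsSubMarkovResolvent U)
    {α β : ℝ} (hα : 0 < α) (hαβ : α ≤ β) (ξ : Measure E) (n : ℕ) :
    (∑ k ∈ Finset.range n,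
      (ENNReal.ofReal (β - α)) ^ k • (fun μ : Measure E => μ.bind (U β))^[k + 1] ξ)
      ≤ ξ.bind (U α) := by
  set B : Measure E → Measure E := fun μ => μ.bind (U β) with hB
  induction n with
  | zero => simp only [Finset.range_zero, Finset.sum_empty]; exact Measure.zero_le _
  | succ n ih =>
      have hres := auxPED_resolvent U hU hα hαβ ξ
      have hstep :
          (∑ k ∈ Finset.range (n + 1), (ENNReal.ofReal (β - α)) ^ k • B^[k + 1] ξ)
            = B ξ + ENNReal.ofReal (β - α)
              • B (∑ k ∈ Finset.range n, (ENNReal.ofReal (β - α)) ^ k • B^[k + 1] ξ) := by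
        rw [Finset.sum_range_succ']
        simp only [pow_zero, one_smul, Function.iterate_one]
        rw [add_comm]
        congr 1
        show _ = ENNReal.ofReal (β - α)
          • (∑ k ∈ Finset.range n, (ENNReal.ofReal (β - α)) ^ k • B^[k + 1] ξ).bind (U β)
        rw [auxPED_bind_sum, Finset.smul_sum]
        refine Finset.sum_congr rfl fun k _ => ?_
        rw [auxPED_bind_smul, smul_smul, ← pow_succ']
        congr 1
        conv_rhs => rw [show (B^[k + 1] ξ).bind (U β) = B (B^[k + 1] ξ) from
          (congrFun hB (B^[k + 1] ξ)).symm]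
        rw [Function.iterate_succ_apply']
      rw [hstep]
      calc B ξ + ENNReal.ofReal (β - α)
            • B (∑ k ∈ Finset.range n, (ENNReal.ofReal (β - α)) ^ k • B^[k + 1] ξ)
          ≤ B ξ + ENNReal.ofReal (β - α) • B (ξ.bind (U α)) :=
            add_le_add le_rfl (auxPED_smul_mono _ (auxPED_bind_mono _ ih))
        _ = ξ.bind (U α) := hres.symm

lemma auxPED_geom_sum {α β : ℝ} (hα : 0 < α) (hαβ : α ≤ β) (n : ℕ) :
    ∑ k ∈ Finset.range n,
      ENNReal.ofReal α * (ENNReal.ofReal (β - α)) ^ k / (ENNReal.ofReal β) ^ (k + 1)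
      = ENNReal.ofReal (1 - ((β - α) / β) ^ n) := by
  have hβ : 0 < β := lt_of_lt_of_le hα hαβ
  have hterm : ∀ k : ℕ,
      ENNReal.ofReal α * (ENNReal.ofReal (β - α)) ^ k / (ENNReal.ofReal β) ^ (k + 1)
        = ENNReal.ofReal (α * (β - α) ^ k / β ^ (k + 1)) := by
    intro k
    rw [← ENNReal.ofReal_pow (by linarith), ← ENNReal.ofReal_mul hα.le,
      ← ENNReal.ofReal_pow hβ.le, ← ENNReal.ofReal_div_of_pos (pow_pos hβ _)]
  rw [Finset.sum_congr rfl fun k _ => hterm k,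
    ← ENNReal.ofReal_sum_of_nonneg (fun k _ => div_nonneg (mul_nonneg hα.le (pow_nonneg (by linarith) _)) (pow_nonneg hβ.le _))]
  congr 1
  have hrw : ∀ k : ℕ, α * (β - α) ^ k / β ^ (k + 1)
      = (1 - (β - α) / β) * ((β - α) / β) ^ k := by
    intro k
    rw [div_pow]
    have h1 : 1 - (β - α) / β = α / β := by
      have hβ' : β ≠ 0 := (lt_of_lt_of_le hα hαβ).ne'
      field_simp
      ring
    rw [h1, div_mul_div_comm, pow_succ, mul_comm β (β ^ k)]
  rw [Finset.sum_congr rfl fun k _ => hrw k, ← Finset.mul_sum]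
  have h := geom_sum_mul ((β - α) / β) n
  linear_combination -h

set_option maxHeartbeats 1000000 in
/-- if `ξ, η` are `U`-excessive, `ξ` purely excessive, and
`ξ - ξ∘βU_β ≤ η - η∘βU_β`, then `ξ ≤ η`. -/
theorem purelyExcessive_domination
    (U : ℝ → ProbabilityTheory.Kernel E E) (hU : IsSubMarkovResolvent U)
    (ξ η : Measure E) [SigmaFinite ξ] [SigmaFinite η]
    (hξ : IsPurelyExcessiveMeas U ξ) (hη : IsExcessiveMeas U η)
    (β : ℝ) (hβ : 0 < β)
    (hle : ξ - ENNReal.ofReal β • ξ.bind (U β) ≤ η - ENNReal.ofReal β • η.bind (U β)) :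
    ξ ≤ η := by
  obtain ⟨hξe, hξp⟩ := hξ
  set T : Measure E → Measure E := fun μ => ENNReal.ofReal β • μ.bind (U β) with hT
  have hTmono : ∀ {μ ν : Measure E}, μ ≤ ν → T μ ≤ T ν :=
    fun h => auxPED_smul_mono _ (auxPED_bind_mono _ h)
  have hTadd : ∀ μ ν : Measure E, T (μ + ν) = T μ + T ν := by
    intro μ ν
    show ENNReal.ofReal β • (μ + ν).bind (U β) = _
    rw [auxPED_bind_add, smul_add]
  have hTitmono : ∀ (n : ℕ) {μ ν : Measure E}, μ ≤ ν → T^[n] μ ≤ T^[n] ν := by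
    intro n
    induction n with
    | zero => intro μ ν h; simpa using h
    | succ n ih =>
        intro μ ν h
        rw [Function.iterate_succ_apply, Function.iterate_succ_apply]
        exact ih (hTmono h)
  have hTitadd : ∀ (n : ℕ) (μ ν : Measure E), T^[n] (μ + ν) = T^[n] μ + T^[n] ν := by
    intro n
    induction n with
    | zero => intro μ ν; simp
    | succ n ih =>
        intro μ ν
        rw [Function.iterate_succ_apply, Function.iterate_succ_apply,
          Function.iterate_succ_apply, hTadd, ih]
  have hTξ : T ξ ≤ ξ := hξe β hβ
  have hTη : T η ≤ η := hη β hβ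
  have hξdec : (ξ - T ξ) + T ξ = ξ := auxPED_sub_add_cancel hTξ
  have hηdec : (η - T η) + T η = η := auxPED_sub_add_cancel hTη
  set ν := ξ - T ξ with hν
  set ρ := η - T η with hρ
  have hνρ : ν ≤ ρ := hle
  have claim1 : ∀ n : ℕ, ξ ≤ (∑ k ∈ Finset.range n, T^[k] ν) + T^[n] ξ := by
    intro n
    induction n with
    | zero => simp
    | succ n ih =>
        have h2 : T^[n] ξ = T^[n] ν + T^[n + 1] ξ := by
          conv_lhs => rw [← hξdec]
          rw [hTitadd n ν (T ξ), ← Function.iterate_succ_apply]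
        calc ξ ≤ (∑ k ∈ Finset.range n, T^[k] ν) + T^[n] ξ := ih
          _ = (∑ k ∈ Finset.range (n + 1), T^[k] ν) + T^[n + 1] ξ := by
              rw [h2, Finset.sum_range_succ, add_assoc]
  have claim2 : ∀ n : ℕ, (∑ k ∈ Finset.range n, T^[k] ρ) + T^[n] η = η := by
    intro n
    induction n with
    | zero => simp
    | succ n ih =>
        have hTsum : T (∑ k ∈ Finset.range n, T^[k] ρ) = ∑ k ∈ Finset.range n, T^[k + 1] ρ := by
          show ENNReal.ofReal β • (∑ k ∈ Finset.range n, T^[k] ρ).bind (U β) = _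
          rw [auxPED_bind_sum, Finset.smul_sum]
          refine Finset.sum_congr rfl fun k _ => ?_
          rw [Function.iterate_succ_apply']
        calc (∑ k ∈ Finset.range (n + 1), T^[k] ρ) + T^[n + 1] η
            = ρ + ((∑ k ∈ Finset.range n, T^[k + 1] ρ) + T^[n + 1] η) := by
              rw [Finset.sum_range_succ']
              simp only [Function.iterate_zero, id_eq]
              abel
          _ = ρ + T ((∑ k ∈ Finset.range n, T^[k] ρ) + T^[n] η) := by
              rw [hTadd, hTsum, ← Function.iterate_succ_apply' T n η]
          _ = ρ + T η := by rw [ih]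
          _ = η := hηdec
  have claim3 : ∀ n : ℕ, (∑ k ∈ Finset.range n, T^[k] ν) ≤ η := by
    intro n
    have hsmono : ∀ m : ℕ, (∑ k ∈ Finset.range m, T^[k] ν) ≤ (∑ k ∈ Finset.range m, T^[k] ρ) := by
      intro m
      induction m with
      | zero => simp
      | succ m ihm =>
          rw [Finset.sum_range_succ, Finset.sum_range_succ]
          exact add_le_add ihm (hTitmono m hνρ)
    calc (∑ k ∈ Finset.range n, T^[k] ν) ≤ (∑ k ∈ Finset.range n, T^[k] ρ) := hsmono n
      _ ≤ (∑ k ∈ Finset.range n, T^[k] ρ) + T^[n] η := Measure.le_add_right le_rfl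
      _ = η := claim2 n
  -- relation between iterates of T and iterates of bind
  have hTB : ∀ (m : ℕ) (μ : Measure E),
      T^[m] μ = (ENNReal.ofReal β) ^ m • (fun μ : Measure E => μ.bind (U β))^[m] μ := by
    intro m
    induction m with
    | zero => intro μ; simp
    | succ m ih =>
        intro μ
        rw [Function.iterate_succ_apply', Function.iterate_succ_apply', ih]
        show ENNReal.ofReal β
          • ((ENNReal.ofReal β ^ m • (fun μ : Measure E => μ.bind (U β))^[m] μ).bind (U β)) = _
        rw [auxPED_bind_smul, smul_smul, ← pow_succ']
  -- vanishing of the remainder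
  have hvan : ∀ s : Set E, MeasurableSet s → (⨅ n : ℕ, T^[n] ξ s) = 0 := by
    intro s hs
    have hanti : Antitone fun n => T^[n] ξ s := by
      refine antitone_nat_of_succ_le fun n => ?_
      have h2 : T^[n + 1] ξ = T^[n] (T ξ) := Function.iterate_succ_apply T n ξ
      rw [h2]
      exact Measure.le_iff'.1 (hTitmono n hTξ) s
    refine le_antisymm ?_ zero_le
    refine ENNReal.le_of_forall_pos_le_add fun ε hε _ => ?_
    rw [zero_add]
    have hε2 : (0 : ℝ≥0∞) < ε / 2 := ENNReal.div_pos (by exact_mod_cast hε.ne') ofNat_ne_top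
    have hinf := hξp s hs
    have hlt : (⨅ (α : ℝ) (_ : 0 < α), (ENNReal.ofReal α • ξ.bind (U α)) s) < ε / 2 := by
      rw [hinf]; exact hε2
    obtain ⟨α0, hα0lt⟩ := iInf_lt_iff.1 hlt
    obtain ⟨hα0, hval0⟩ := iInf_lt_iff.1 hα0lt
    set α := min α0 β with hαdef
    have hα : 0 < α := lt_min hα0 hβ
    have hαβ : α ≤ β := min_le_right _ _
    have hval : (ENNReal.ofReal α • ξ.bind (U α)) s ≤ ε / 2 :=
      le_trans (Measure.le_iff'.1
        (auxPED_alpha_mono U hU hα (min_le_left α0 β) ξ (hξe α hα)) s) hval0.le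
    set c : ℝ := (β - α) / β with hc
    have hc0 : 0 ≤ c := div_nonneg (by linarith) hβ.le
    have hc1 : c < 1 := by
      rw [hc, div_lt_one hβ]
      linarith
    -- key inequality
    have hkey : ∀ n : ℕ, (T^[n] ξ s) * ENNReal.ofReal (1 - c ^ n)
        ≤ (ENNReal.ofReal α • ξ.bind (U α)) s := by
      intro n
      set B : Measure E → Measure E := fun μ => μ.bind (U β) with hBdef
      have hsum_s : (∑ k ∈ Finset.range n,
          (ENNReal.ofReal (β - α)) ^ k * (B^[k + 1] ξ s)) ≤ (ξ.bind (U α)) s := by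
        have h3 := Measure.le_iff'.1 (auxPED_geom_bound U hU hα hαβ ξ n) s
        rwa [Measure.finset_sum_apply] at h3
      have hdiv : ∀ k ∈ Finset.range n,
          (T^[n] ξ s) / (ENNReal.ofReal β) ^ (k + 1) ≤ B^[k + 1] ξ s := by
        intro k hk
        have hkn : k + 1 ≤ n := Finset.mem_range.1 hk
        have h4 : T^[n] ξ s ≤ T^[k + 1] ξ s := hanti hkn
        have h5 : T^[k + 1] ξ s = (ENNReal.ofReal β) ^ (k + 1) * (B^[k + 1] ξ s) := by
          rw [hTB (k + 1) ξ, Measure.smul_apply, smul_eq_mul]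
        refine (ENNReal.div_le_iff (pow_ne_zero _ (by simp [hβ])) (by
          exact pow_ne_top ofReal_ne_top)).2 ?_
        rw [mul_comm]
        rw [h5] at h4
        exact h4
      calc (T^[n] ξ s) * ENNReal.ofReal (1 - c ^ n)
          = (T^[n] ξ s) * ∑ k ∈ Finset.range n,
              ENNReal.ofReal α * (ENNReal.ofReal (β - α)) ^ k / (ENNReal.ofReal β) ^ (k + 1) := by
            rw [auxPED_geom_sum hα hαβ n]
        _ = ∑ k ∈ Finset.range n, (ENNReal.ofReal α * (ENNReal.ofReal (β - α)) ^ k)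
              * ((T^[n] ξ s) / (ENNReal.ofReal β) ^ (k + 1)) := by
            rw [Finset.mul_sum]
            refine Finset.sum_congr rfl fun k _ => ?_
            rw [div_eq_mul_inv, div_eq_mul_inv]
            ring
        _ ≤ ∑ k ∈ Finset.range n, (ENNReal.ofReal α * (ENNReal.ofReal (β - α)) ^ k)
              * (B^[k + 1] ξ s) :=
            Finset.sum_le_sum fun k hk => mul_le_mul_right (hdiv k hk) _
        _ = ENNReal.ofReal α * ∑ k ∈ Finset.range n,
              (ENNReal.ofReal (β - α)) ^ k * (B^[k + 1] ξ s) := by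
            rw [Finset.mul_sum]
            exact Finset.sum_congr rfl fun k _ => by ring
        _ ≤ ENNReal.ofReal α * (ξ.bind (U α)) s := mul_le_mul_right hsum_s _
        _ = (ENNReal.ofReal α • ξ.bind (U α)) s := by
            rw [Measure.smul_apply, smul_eq_mul]
    -- choose n with c ^ n < 1 / 2
    obtain ⟨n, hn⟩ : ∃ n : ℕ, c ^ n < 1 / 2 :=
      ((tendsto_pow_atTop_nhds_zero_of_lt_one hc0 hc1).eventually
        (gt_mem_nhds (by norm_num : (0 : ℝ) < 1 / 2))).exists
    have hhalf : ENNReal.ofReal (1 / 2 : ℝ) ≤ ENNReal.ofReal (1 - c ^ n) :=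
      ENNReal.ofReal_le_ofReal (by linarith)
    have h6 : (T^[n] ξ s) * ENNReal.ofReal (1 / 2 : ℝ) ≤ ε / 2 :=
      le_trans (mul_le_mul_right hhalf _) (le_trans (hkey n) hval)
    have h7 : ENNReal.ofReal (1 / 2 : ℝ) = 1 / 2 := by
      rw [ENNReal.ofReal_div_of_pos (by norm_num)]
      norm_num
    have h8 : T^[n] ξ s ≤ ε := by
      have h9 : (T^[n] ξ s) * (1 / 2) * 2 ≤ ε / 2 * 2 := by
        rw [h7] at h6
        exact mul_le_mul_left h6 2
      rwa [one_div, ← div_eq_mul_inv, ENNReal.div_mul_cancel two_ne_zero ofNat_ne_top,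
        ENNReal.div_mul_cancel two_ne_zero ofNat_ne_top] at h9
    exact le_trans (iInf_le _ n) h8
  -- conclusion
  refine Measure.le_iff.2 fun s hs => ?_
  have h1 : ∀ n : ℕ, ξ s ≤ η s + T^[n] ξ s := by
    intro n
    calc ξ s ≤ ((∑ k ∈ Finset.range n, T^[k] ν) + T^[n] ξ) s :=
          Measure.le_iff'.1 (claim1 n) s
      _ = (∑ k ∈ Finset.range n, T^[k] ν) s + T^[n] ξ s := Measure.add_apply _ _ _
      _ ≤ η s + T^[n] ξ s := add_le_add_left (Measure.le_iff'.1 (claim3 n) s) _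
  calc ξ s ≤ ⨅ n : ℕ, (η s + T^[n] ξ s) := le_iInf h1
    _ = η s + ⨅ n : ℕ, T^[n] ξ s := ENNReal.add_iInf.symm
    _ = η s := by rw [hvan s hs, add_zero]
end

section
/- Let N be a bounded kernel on a measurable space (E,B) and μ a σ-finite measure such that for every B ∈ B with μ(B)=0 one has N(1_B)=0 μ-a.e. Then for every E₀ ∈ B with μ(E∖E₀)=0 there exists F ∈ B with F ⊆ E₀, μ(E∖F)=0, and N(1_{E∖F})(x)=0 for every x ∈ F. -/
open MeasureTheory ProbabilityTheory ENNReal Set Filter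

variable {E : Type*} [MeasurableSpace E]

/-- Lemma 2.1: if `N` is a bounded kernel such that `μ(B) = 0` implies
`N(1_B) = 0` μ-a.e., then for every `E₀` of full measure there is a measurable `F ⊆ E₀`
of full measure with `N(1_{E∖F}) = 0` everywhere on `F`. -/
theorem cleaning_lemma
    (N : ProbabilityTheory.Kernel E E) (hNb : ∃ C : ℝ≥0∞, C < ⊤ ∧ ∀ x, N x Set.univ ≤ C)
    (μ : Measure E) [SigmaFinite μ]
    (hN : ∀ B : Set E, MeasurableSet B → μ B = 0 → ∀ᵐ x ∂μ, N x B = 0)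
    (E₀ : Set E) (hE₀ : MeasurableSet E₀) (hμE₀ : μ E₀ᶜ = 0) :
    ∃ F : Set E, MeasurableSet F ∧ F ⊆ E₀ ∧ μ Fᶜ = 0 ∧ ∀ x ∈ F, N x Fᶜ = 0 := by
  -- Define the decreasing sequence E_n
  set S : ℕ → Set E := fun n => Nat.rec E₀ (fun _ s => s ∩ {x | N x sᶜ = 0}) n with hS
  have hSsucc : ∀ n, S (n+1) = S n ∩ {x | N x (S n)ᶜ = 0} := fun n => rfl
  have hmeas : ∀ n, MeasurableSet (S n) := by
    intro n
    induction n with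
    | zero => exact hE₀
    | succ n ih =>
      rw [hSsucc]
      exact ih.inter ((N.measurable_coe ih.compl) (measurableSet_singleton 0))
  have hnull : ∀ n, μ (S n)ᶜ = 0 := by
    intro n
    induction n with
    | zero => exact hμE₀
    | succ n ih =>
      have h := hN (S n)ᶜ (hmeas n).compl ih
      rw [hSsucc, Set.compl_inter]
      refine le_antisymm (le_trans (measure_union_le _ _) ?_) zero_le
      rw [ih, zero_add]
      have : {x | N x (S n)ᶜ = 0}ᶜ = {x | ¬ N x (S n)ᶜ = 0} := rfl
      rw [this]
      exact le_of_eq (ae_iff.mp h)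
  have hanti : ∀ n, S (n+1) ⊆ S n := fun n => by
    rw [hSsucc]; exact Set.inter_subset_left
  have hanti' : Antitone S := antitone_nat_of_succ_le hanti
  refine ⟨⋂ n, S n, MeasurableSet.iInter hmeas, Set.iInter_subset S 0, ?_, ?_⟩
  · rw [Set.compl_iInter]
    exact le_antisymm (le_trans (measure_iUnion_le _) (by simp [hnull])) zero_le
  · intro x hx
    rw [Set.compl_iInter]
    have hdir : Directed (· ⊆ ·) (fun n => (S n)ᶜ) := by
      intro m n
      exact ⟨max m n, Set.compl_subset_compl.mpr (hanti' (le_max_left m n)),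
        Set.compl_subset_compl.mpr (hanti' (le_max_right m n))⟩
    rw [hdir.measure_iUnion]
    simp only [ENNReal.iSup_eq_zero]
    intro n
    have hx' : x ∈ S (n+1) := Set.mem_iInter.mp hx (n+1)
    rw [hSsucc] at hx'
    exact hx'.2
end

section
/- Let U be a sub-Markovian resolvent with initial kernel U, and g a nonnegative measurable function with g ≤ 1, Ug > 0 everywhere, and Ug ≤ 1 ξ-a.e. for a σ-finite measure ξ. Set F = [Ug < ∞]. Then U_α(1_{E∖F}) = 0 on F for every α>0, hence U(1_{E∖F}) = 0 on F, and the function f = αU_α g · 1_F + 1_{E∖F} is strictly positive with Uf ≤ Ug < ∞ on F. -/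
open MeasureTheory ProbabilityTheory ENNReal Set Filter

variable {E : Type*} [MeasurableSpace E]

section Aux
variable {U : ℝ → ProbabilityTheory.Kernel E E} {f : E → ℝ≥0∞} {α β : ℝ}

lemma kernel_univ_le (hU : IsSubMarkovResolvent U) (hα : 0 < α) (x : E) :
    (U α x) Set.univ ≤ (ENNReal.ofReal α)⁻¹ := by
  rw [ENNReal.le_inv_iff_mul_le, mul_comm]
  exact hU.1 α hα x

lemma measurable_resOp (hU : IsSubMarkovResolvent U) (hα : 0 < α) (hf : Measurable f) :
    Measurable (resOp U α f) := by
  haveI : IsFiniteKernel (U α) :=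
    ⟨⟨(ENNReal.ofReal α)⁻¹, ENNReal.inv_lt_top.2 (ENNReal.ofReal_pos.2 hα),
      fun x => kernel_univ_le hU hα x⟩⟩
  exact hf.lintegral_kernel

lemma resOp_mono {f g : E → ℝ≥0∞} (h : ∀ y, f y ≤ g y) (x : E) :
    resOp U α f x ≤ resOp U α g x := lintegral_mono h

lemma resOp_le_of_le (hU : IsSubMarkovResolvent U) (hα : 0 < α) {C : ℝ≥0∞}
    (hC : ∀ y, f y ≤ C) (x : E) : resOp U α f x ≤ C * (ENNReal.ofReal α)⁻¹ :=
  calc resOp U α f x ≤ ∫⁻ _, C ∂(U α x) := lintegral_mono hC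
  _ = C * (U α x) Set.univ := lintegral_const C
  _ ≤ C * (ENNReal.ofReal α)⁻¹ := mul_le_mul_right (kernel_univ_le hU hα x) C

lemma resOp_anti (hU : IsSubMarkovResolvent U) (hα : 0 < α) (hαβ : α ≤ β)
    (hf : Measurable f) (x : E) : resOp U β f x ≤ resOp U α f x := by
  rw [hU.2 α β hα hαβ f hf x]; exact le_self_add

lemma iniOp_eq_iSup (hU : IsSubMarkovResolvent U) (hf : Measurable f) (hα : 0 < α) (x : E) :
    iniOp U f x = ⨆ m : ℕ, resOp U (α / (m + 1)) f x := by
  have hpos : ∀ m : ℕ, (0:ℝ) < α / (m + 1) := fun m => by positivity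
  apply le_antisymm
  · apply iSup₂_le
    intro β hβ
    obtain ⟨m, hm⟩ := exists_nat_ge (α / β)
    have h1 : α / (m + 1) ≤ β := by
      rw [div_le_iff₀ (by positivity)]
      rw [div_le_iff₀ hβ] at hm
      nlinarith
    exact le_iSup_of_le m (resOp_anti hU (hpos m) h1 hf x)
  · exact iSup_le fun m => le_iSup₂_of_le (α / (m + 1)) (hpos m) le_rfl
noncomputable def itOp (U : ℝ → ProbabilityTheory.Kernel E E) (α : ℝ) (f : E → ℝ≥0∞) :
    ℕ → E → ℝ≥0∞
  | 0 => f
  | (n+1) => resOp U α (itOp U α f n)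

lemma measurable_itOp (hU : IsSubMarkovResolvent U) (hα : 0 < α) (hf : Measurable f) :
    ∀ n, Measurable (itOp U α f n)
  | 0 => hf
  | (n+1) => measurable_resOp hU hα (measurable_itOp hU hα hf n)

lemma itOp_le (hU : IsSubMarkovResolvent U) (hα : 0 < α) (hf1 : ∀ y, f y ≤ 1) :
    ∀ n y, itOp U α f n y ≤ ((ENNReal.ofReal α)⁻¹) ^ n
  | 0, y => by simpa [itOp] using hf1 y
  | (n+1), y => by
      rw [pow_succ]
      exact resOp_le_of_le hU hα (itOp_le hU hα hf1 n) y

lemma expansion_partial (hU : IsSubMarkovResolvent U) (hβ : 0 < β) (hβα : β ≤ α)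
    (hf : Measurable f) (x : E) (n : ℕ) :
    resOp U β f x = (∑ k ∈ Finset.range n,
        (ENNReal.ofReal (α - β)) ^ k * itOp U α f (k+1) x)
      + (ENNReal.ofReal (α - β)) ^ n * resOp U β (itOp U α f n) x := by
  induction n with
  | zero => simp [itOp]
  | succ n ih =>
      have h2 := hU.2 β α hβ hβα (itOp U α f n) (measurable_itOp hU (hβ.trans_le hβα) hf n) x
      have : resOp U β (itOp U α f n) x
          = itOp U α f (n+1) x + ENNReal.ofReal (α - β) * resOp U β (itOp U α f (n+1)) x := h2
      rw [ih, this, Finset.sum_range_succ, mul_add, pow_succ]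
      ring

lemma resOp_eq_tsum (hU : IsSubMarkovResolvent U) (hβ : 0 < β) (hβα : β ≤ α)
    (hf : Measurable f) (hf1 : ∀ y, f y ≤ 1) (x : E) :
    resOp U β f x = ∑' k : ℕ, (ENNReal.ofReal (α - β)) ^ k * itOp U α f (k+1) x := by
  have hα : 0 < α := hβ.trans_le hβα
  set c := ENNReal.ofReal (α - β) with hc
  set S := ∑' k : ℕ, c ^ k * itOp U α f (k+1) x with hS
  have hSsup : S = ⨆ n, ∑ k ∈ Finset.range n, c ^ k * itOp U α f (k+1) x :=
    ENNReal.tsum_eq_iSup_nat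
  apply le_antisymm
  · -- remainder bound
    set r := c * (ENNReal.ofReal α)⁻¹ with hr
    have hrlt : r < 1 := by
      have : r = ENNReal.ofReal ((α - β) / α) := by
        rw [ENNReal.ofReal_div_of_pos hα, hr, div_eq_mul_inv]
      rw [this, ENNReal.ofReal_lt_one]
      rw [div_lt_one hα]
      linarith
    have hrem : ∀ n, c ^ n * resOp U β (itOp U α f n) x ≤ r ^ n * (ENNReal.ofReal β)⁻¹ := by
      intro n
      calc c ^ n * resOp U β (itOp U α f n) x
          ≤ c ^ n * (((ENNReal.ofReal α)⁻¹) ^ n * (ENNReal.ofReal β)⁻¹) :=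
            mul_le_mul_right (resOp_le_of_le hU hβ (itOp_le hU hα hf1 n) x) _
        _ = r ^ n * (ENNReal.ofReal β)⁻¹ := by rw [hr, mul_pow]; ring
    have hb : ∀ n, resOp U β f x ≤ S + r ^ n * (ENNReal.ofReal β)⁻¹ := by
      intro n
      rw [expansion_partial hU hβ hβα hf x n]
      refine add_le_add ?_ (hrem n)
      rw [hSsup]
      exact le_iSup (fun n => ∑ k ∈ Finset.range n, c ^ k * itOp U α f (k+1) x) n
    have htend : Tendsto (fun n : ℕ => S + r ^ n * (ENNReal.ofReal β)⁻¹) atTop (nhds S) := by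
      have h1 : Tendsto (fun n : ℕ => r ^ n) atTop (nhds 0) :=
        ENNReal.tendsto_pow_atTop_nhds_zero_of_lt_one hrlt
      have h2 : Tendsto (fun n : ℕ => r ^ n * (ENNReal.ofReal β)⁻¹) atTop (nhds 0) := by
        simpa using ENNReal.Tendsto.mul_const h1 (Or.inr (ENNReal.inv_ne_top.2
          (ENNReal.ofReal_pos.2 hβ).ne'))
      simpa using tendsto_const_nhds.add h2
    exact ge_of_tendsto htend (Eventually.of_forall hb)
  · rw [hSsup]
    apply iSup_le
    intro n
    rw [expansion_partial hU hβ hβα hf x n]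
    exact le_self_add

lemma iSup_tsum_swap {a : ℕ → ℕ → ℝ≥0∞} (hmono : ∀ k, Monotone fun m => a m k) :
    ⨆ m, ∑' k, a m k = ∑' k, ⨆ m, a m k := by
  have h := lintegral_iSup (μ := Measure.count) (f := fun m k => a m k)
    (fun n => measurable_of_countable _) (fun m m' h k => hmono k h)
  simp only [lintegral_count] at h
  exact h.symm

lemma iniOp_eq_tsum (hU : IsSubMarkovResolvent U) (hα : 0 < α)
    (hf : Measurable f) (hf1 : ∀ y, f y ≤ 1) (x : E) :
    iniOp U f x = ∑' k : ℕ, (ENNReal.ofReal α) ^ k * itOp U α f (k+1) x := by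
  have hpos : ∀ m : ℕ, (0:ℝ) < α / (m + 1) := fun m => by positivity
  have hle : ∀ m : ℕ, α / (m + 1) ≤ α :=
    fun m => div_le_self hα.le (by exact_mod_cast Nat.le_add_left 1 m)
  rw [iniOp_eq_iSup hU hf hα x]
  have hb : ∀ m : ℕ, resOp U (α / (m+1)) f x
      = ∑' k : ℕ, (ENNReal.ofReal (α - α / (m+1))) ^ k * itOp U α f (k+1) x :=
    fun m => resOp_eq_tsum hU (hpos m) (hle m) hf hf1 x
  simp_rw [hb]
  have hmonoreal : Monotone fun m : ℕ => α - α / (m + 1) := by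
    intro m m' h
    have : α / (m' + 1) ≤ α / (m + 1) := by
      gcongr
    linarith
  have hmono' : ∀ k : ℕ, Monotone fun m : ℕ =>
      (ENNReal.ofReal (α - α / (m+1))) ^ k * itOp U α f (k+1) x := fun k m m' h =>
    mul_le_mul_left
      (pow_le_pow_left₀ zero_le (ENNReal.ofReal_le_ofReal (hmonoreal h)) k) _
  rw [iSup_tsum_swap hmono']
  congr 1
  funext k
  have hmono : Monotone fun m : ℕ => (ENNReal.ofReal (α - α / (m+1))) ^ k * itOp U α f (k+1) x :=
      fun m m' h => mul_le_mul_left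
        (pow_le_pow_left₀ zero_le (ENNReal.ofReal_le_ofReal (hmonoreal h)) k) _
  have hrtend : Tendsto (fun m : ℕ => α - α / (m + 1)) atTop (nhds α) := by
    have h0 : Tendsto (fun m : ℕ => α / (m + 1)) atTop (nhds 0) := by
      have := tendsto_one_div_add_atTop_nhds_zero_nat.const_mul α
      simpa [mul_one_div, div_eq_mul_inv] using this
    simpa using tendsto_const_nhds.sub h0
  have htend : Tendsto (fun m : ℕ => (ENNReal.ofReal (α - α / (m+1))) ^ k * itOp U α f (k+1) x)
      atTop (nhds ((ENNReal.ofReal α) ^ k * itOp U α f (k+1) x)) :=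
    ENNReal.Tendsto.mul_const (ENNReal.Tendsto.pow (ENNReal.tendsto_ofReal hrtend))
      (Or.inl (pow_ne_zero k (ENNReal.ofReal_pos.2 hα).ne'))
  exact tendsto_nhds_unique (tendsto_atTop_iSup hmono) htend

lemma shifted_tsum_le (hU : IsSubMarkovResolvent U) (hα : 0 < α)
    (hf : Measurable f) (hf1 : ∀ y, f y ≤ 1) (x : E) :
    ∑' k : ℕ, (ENNReal.ofReal α) ^ (k+1) * itOp U α f (k+2) x ≤ iniOp U f x := by
  rw [iniOp_eq_tsum hU hα hf hf1 x]
  set a : ℕ → ℝ≥0∞ := fun k => (ENNReal.ofReal α) ^ k * itOp U α f (k+1) x with ha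
  have : ∑' k : ℕ, (ENNReal.ofReal α) ^ (k+1) * itOp U α f (k+2) x = ∑' k : ℕ, a (k+1) := rfl
  rw [this]
  conv_rhs => rw [tsum_eq_zero_add' (f := a) ENNReal.summable]
  exact le_add_self

lemma resOp_iniOp_le (hU : IsSubMarkovResolvent U) (hα : 0 < α)
    (hf : Measurable f) (hf1 : ∀ y, f y ≤ 1) (x : E) :
    ENNReal.ofReal α * resOp U α (iniOp U f) x ≤ iniOp U f x := by
  have hrepr : ∀ y, iniOp U f y = ∑' k : ℕ, (ENNReal.ofReal α) ^ k * itOp U α f (k+1) y :=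
    fun y => iniOp_eq_tsum hU hα hf hf1 y
  have h1 : resOp U α (iniOp U f) x
      = ∑' k : ℕ, (ENNReal.ofReal α) ^ k * itOp U α f (k+2) x := by
    unfold resOp
    calc ∫⁻ y, iniOp U f y ∂(U α x)
        = ∫⁻ y, ∑' k : ℕ, (ENNReal.ofReal α) ^ k * itOp U α f (k+1) y ∂(U α x) := by
          congr 1; funext y; exact hrepr y
      _ = ∑' k : ℕ, ∫⁻ y, (ENNReal.ofReal α) ^ k * itOp U α f (k+1) y ∂(U α x) :=
          lintegral_tsum fun k =>
            ((measurable_itOp hU hα hf (k+1)).const_mul _).aemeasurable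
      _ = ∑' k : ℕ, (ENNReal.ofReal α) ^ k * itOp U α f (k+2) x := by
          congr 1; funext k
          rw [lintegral_const_mul _ (measurable_itOp hU hα hf (k+1))]
          rfl
  rw [h1, ← ENNReal.tsum_mul_left]
  calc ∑' k : ℕ, ENNReal.ofReal α * ((ENNReal.ofReal α) ^ k * itOp U α f (k+2) x)
      = ∑' k : ℕ, (ENNReal.ofReal α) ^ (k+1) * itOp U α f (k+2) x := by
        congr 1; funext k; rw [pow_succ]; ring
    _ ≤ iniOp U f x := shifted_tsum_le hU hα hf hf1 x

lemma resOp_sq_zero (hU : IsSubMarkovResolvent U) (hα : 0 < α) {C : ℝ≥0∞}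
    (hf : Measurable f) (hC : C ≠ ⊤) (hfC : ∀ y, f y ≤ C) (x : E)
    (h0 : resOp U α f x = 0) : resOp U α (resOp U α f) x = 0 := by
  have hγpos : ∀ m : ℕ, (0:ℝ) < α + 1/(m+1) := fun m => by positivity
  have hγle : ∀ m : ℕ, α ≤ α + 1/(m+1) := fun m => le_add_of_nonneg_right (by positivity)
  have h1 : ∀ m : ℕ, resOp U α (resOp U (α + 1/(m+1)) f) x = 0 := by
    intro m
    have heq := hU.2 α (α + 1/(m+1)) hα (hγle m) f hf x
    rw [h0] at heq
    have h2 := (add_eq_zero.1 heq.symm).2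
    rcases mul_eq_zero.1 h2 with h3 | h3
    · exfalso
      refine (ENNReal.ofReal_pos.2 ?_).ne' h3
      have : α + 1/(m+1) - α = 1/((m:ℝ)+1) := by ring
      rw [this]; positivity
    · exact h3
  have h2 : ∀ y, resOp U α f y = ⨆ m : ℕ, resOp U (α + 1/(m+1)) f y := by
    intro y
    set B := C * (ENNReal.ofReal α)⁻¹ * (ENNReal.ofReal α)⁻¹ with hB
    have hBne : B ≠ ⊤ :=
      ENNReal.mul_ne_top (ENNReal.mul_ne_top hC (ENNReal.inv_ne_top.2
        (ENNReal.ofReal_pos.2 hα).ne')) (ENNReal.inv_ne_top.2 (ENNReal.ofReal_pos.2 hα).ne')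
    apply le_antisymm
    · have key : ∀ m : ℕ, resOp U α f y
          ≤ (⨆ m : ℕ, resOp U (α + 1/(m+1)) f y) + ENNReal.ofReal (1/((m:ℝ)+1)) * B := by
        intro m
        rw [hU.2 α (α + 1/(m+1)) hα (hγle m) f hf y]
        have hsub : α + 1/((m:ℝ)+1) - α = 1/((m:ℝ)+1) := by ring
        rw [hsub]
        refine add_le_add (le_iSup (fun m : ℕ => resOp U (α + 1/(m+1)) f y) m)
          (mul_le_mul_right ?_ _)
        have hb1 : ∀ z, resOp U (α + 1/(m+1)) f z ≤ C * (ENNReal.ofReal α)⁻¹ := by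
          intro z
          refine (resOp_le_of_le hU (hγpos m) hfC z).trans (mul_le_mul_right ?_ C)
          exact ENNReal.inv_le_inv.2 (ENNReal.ofReal_le_ofReal (hγle m))
        exact (resOp_le_of_le hU hα hb1 y).trans_eq hB.symm
      have htend : Tendsto (fun m : ℕ =>
          (⨆ m : ℕ, resOp U (α + 1/(m+1)) f y) + ENNReal.ofReal (1/((m:ℝ)+1)) * B)
          atTop (nhds (⨆ m : ℕ, resOp U (α + 1/(m+1)) f y)) := by
        have h0' : Tendsto (fun m : ℕ => ENNReal.ofReal (1/((m:ℝ)+1)) * B) atTop (nhds 0) := by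
          have := ENNReal.Tendsto.mul_const
            (ENNReal.tendsto_ofReal tendsto_one_div_add_atTop_nhds_zero_nat) (Or.inr hBne)
          simpa using this
        simpa using tendsto_const_nhds.add h0'
      exact ge_of_tendsto htend (Eventually.of_forall key)
    · exact iSup_le fun m => resOp_anti hU hα (hγle m) hf y
  have hmeas : ∀ m : ℕ, Measurable (resOp U (α + 1/(m+1)) f) :=
    fun m => measurable_resOp hU (hγpos m) hf
  have hmono : Monotone fun m : ℕ => resOp U (α + 1/(m+1)) f := by
    intro m m' h y
    refine resOp_anti hU (hγpos m') ?_ hf y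
    gcongr
  calc resOp U α (resOp U α f) x
      = ∫⁻ y, ⨆ m : ℕ, resOp U (α + 1/(m+1)) f y ∂(U α x) := by
        unfold resOp; congr 1; funext y; exact h2 y
    _ = ⨆ m : ℕ, resOp U α (resOp U (α + 1/(m+1)) f) x := lintegral_iSup hmeas hmono
    _ = 0 := by
        rw [ENNReal.iSup_eq_zero]
        exact h1

lemma itOp_zero (hU : IsSubMarkovResolvent U) (hα : 0 < α) (hf : Measurable f)
    (hf1 : ∀ y, f y ≤ 1) (x : E) (h0 : resOp U α f x = 0) :
    ∀ k, itOp U α f (k+1) x = 0 := by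
  intro k
  induction k with
  | zero => exact h0
  | succ k ih =>
      have h := resOp_sq_zero hU hα (measurable_itOp hU hα hf k)
        (ENNReal.pow_ne_top (ENNReal.inv_ne_top.2 (ENNReal.ofReal_pos.2 hα).ne'))
        (itOp_le hU hα hf1 k) x ih
      exact h

lemma measurable_iniOp (hU : IsSubMarkovResolvent U) (hf : Measurable f) :
    Measurable (iniOp U f) := by
  have h : iniOp U f = fun x => ⨆ m : ℕ, resOp U (1 / (m + 1)) f x :=
    funext fun x => by simpa using iniOp_eq_iSup hU hf one_pos x
  rw [h]
  exact Measurable.iSup fun m => measurable_resOp hU (by positivity) hf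

end Aux

theorem finiteness_set_absorbing'
    (U : ℝ → ProbabilityTheory.Kernel E E) (hU : IsSubMarkovResolvent U)
    (g : E → ℝ≥0∞) (hg : Measurable g) (hg1 : ∀ x, g x ≤ 1)
    (hpos : ∀ x, 0 < iniOp U g x)
    (α : ℝ) (hα : 0 < α) :
    (∀ α' : ℝ, 0 < α' → ∀ x ∈ {y | iniOp U g y < ⊤},
      resOp U α' ({y | iniOp U g y < ⊤}ᶜ.indicator 1) x = 0) ∧
    (∀ x ∈ {y | iniOp U g y < ⊤},
      iniOp U ({y | iniOp U g y < ⊤}ᶜ.indicator 1) x = 0) ∧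
    (∀ x, 0 < ENNReal.ofReal α * resOp U α g x * {y | iniOp U g y < ⊤}.indicator 1 x
      + ({y | iniOp U g y < ⊤}ᶜ.indicator 1 x)) ∧
    (∀ x ∈ {y | iniOp U g y < ⊤},
      iniOp U (fun z => ENNReal.ofReal α * resOp U α g z * {y | iniOp U g y < ⊤}.indicator 1 z
        + {y | iniOp U g y < ⊤}ᶜ.indicator 1 z) x ≤ iniOp U g x ∧ iniOp U g x < ⊤) := by
  set F : Set E := {y | iniOp U g y < ⊤} with hF
  -- resOp U α g never vanishes
  have hresne : ∀ β : ℝ, 0 < β → ∀ x, resOp U β g x ≠ 0 := by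
    intro β hβ x h0
    have hz : iniOp U g x = 0 := by
      rw [iniOp_eq_tsum hU hβ hg hg1 x]
      have : ∀ k : ℕ, (ENNReal.ofReal β) ^ k * itOp U β g (k+1) x = 0 := by
        intro k
        rw [itOp_zero hU hβ hg hg1 x h0 k, mul_zero]
      simp [this]
    exact (hpos x).ne' hz
  -- Part 1
  have part1 : ∀ α' : ℝ, 0 < α' → ∀ x ∈ F, resOp U α' (Fᶜ.indicator 1) x = 0 := by
    intro α' hα' x hx
    have hR : ENNReal.ofReal α' * resOp U α' (iniOp U g) x ≤ iniOp U g x :=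
      resOp_iniOp_le hU hα' hg hg1 x
    have hfin : resOp U α' (iniOp U g) x ≠ ⊤ := by
      intro htop
      rw [htop, ENNReal.mul_top (ENNReal.ofReal_pos.2 hα').ne'] at hR
      exact hx.ne (top_le_iff.1 hR)
    have key : ∀ n : ℕ, resOp U α' (Fᶜ.indicator 1) x
        ≤ (((n:ℝ≥0∞)) + 1)⁻¹ * resOp U α' (iniOp U g) x := by
      intro n
      have hne0 : (((n:ℝ≥0∞)) + 1)⁻¹ ≠ 0 :=
        ENNReal.inv_ne_zero.2 (ENNReal.add_ne_top.2 ⟨ENNReal.natCast_ne_top n, one_ne_top⟩)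
      have hpt : ∀ y, Fᶜ.indicator (1 : E → ℝ≥0∞) y ≤ (((n:ℝ≥0∞)) + 1)⁻¹ * iniOp U g y := by
        intro y
        by_cases hy : y ∈ Fᶜ
        · rw [Set.indicator_of_mem hy, Pi.one_apply]
          have hyt : iniOp U g y = ⊤ := by
            have := hy
            simp only [hF, Set.mem_compl_iff, Set.mem_setOf_eq, not_lt, top_le_iff] at this
            exact this
          rw [hyt, ENNReal.mul_top hne0]
          exact le_top
        · rw [Set.indicator_of_notMem hy]
          exact zero_le
      calc resOp U α' (Fᶜ.indicator 1) x
          ≤ resOp U α' (fun y => (((n:ℝ≥0∞)) + 1)⁻¹ * iniOp U g y) x := resOp_mono hpt x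
        _ = (((n:ℝ≥0∞)) + 1)⁻¹ * resOp U α' (iniOp U g) x :=
            lintegral_const_mul _ (measurable_iniOp hU hg)
    have htend : Tendsto (fun n : ℕ => (((n:ℝ≥0∞)) + 1)⁻¹ * resOp U α' (iniOp U g) x)
        atTop (nhds 0) := by
      have h1 : Tendsto (fun n : ℕ => (((n:ℝ≥0∞)) + 1)⁻¹) atTop (nhds 0) := by
        have h2 := ENNReal.tendsto_inv_nat_nhds_zero.comp (tendsto_add_atTop_nat 1)
        have h3 : (fun n : ℕ => (((n+1:ℕ):ℝ≥0∞))⁻¹) = fun n : ℕ => (((n:ℝ≥0∞)) + 1)⁻¹ := by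
          funext n; push_cast; rfl
        rwa [← h3]
      simpa using ENNReal.Tendsto.mul_const h1 (Or.inr hfin)
    have hle0 : resOp U α' (Fᶜ.indicator 1) x ≤ 0 :=
      ge_of_tendsto htend (Eventually.of_forall key)
    exact le_zero_iff.1 hle0
  refine ⟨part1, ?_, ?_, ?_⟩
  · -- Part 2
    intro x hx
    refine le_antisymm (iSup₂_le fun β hβ => (part1 β hβ x hx).le) zero_le
  · -- Part 3
    intro x
    by_cases hx : x ∈ F
    · have h1 : F.indicator (1 : E → ℝ≥0∞) x = 1 := Set.indicator_of_mem hx 1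
      refine lt_of_lt_of_le ?_ le_self_add
      rw [h1, mul_one]
      exact ENNReal.mul_pos (ENNReal.ofReal_pos.2 hα).ne' (hresne α hα x)
    · have h2 : Fᶜ.indicator (1 : E → ℝ≥0∞) x = 1 := Set.indicator_of_mem hx 1
      refine lt_of_lt_of_le ?_ le_add_self
      rw [h2]
      exact zero_lt_one
  · -- Part 4
    intro x hx
    refine ⟨?_, hx⟩
    set c := ENNReal.ofReal α with hc
    set f₁ : E → ℝ≥0∞ := fun z => c * resOp U α g z with hf₁
    have hf₁m : Measurable f₁ := (measurable_resOp hU hα hg).const_mul c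
    have hf₁1 : ∀ z, f₁ z ≤ 1 := by
      intro z
      have h1 : resOp U α g z ≤ (U α z) Set.univ := by
        have := lintegral_mono (μ := U α z) hg1
        simpa [resOp] using this
      exact (mul_le_mul_right h1 c).trans (hU.1 α hα z)
    -- pointwise bound
    have hptw : ∀ z, c * resOp U α g z * F.indicator 1 z + Fᶜ.indicator 1 z
        ≤ f₁ z + Fᶜ.indicator 1 z := by
      intro z
      refine add_le_add ?_ le_rfl
      have : F.indicator (1 : E → ℝ≥0∞) z ≤ 1 := by
        by_cases hz : z ∈ F
        · rw [Set.indicator_of_mem hz]; exact le_rfl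
        · rw [Set.indicator_of_notMem hz]; exact zero_le
      calc c * resOp U α g z * F.indicator 1 z ≤ c * resOp U α g z * 1 :=
            mul_le_mul_right this _
        _ = f₁ z := mul_one _
    have hmono : iniOp U (fun z => c * resOp U α g z * F.indicator 1 z + Fᶜ.indicator 1 z) x
        ≤ iniOp U (fun z => f₁ z + Fᶜ.indicator 1 z) x :=
      iSup_mono fun β => iSup_mono fun _ => resOp_mono hptw x
    have hsub : iniOp U (fun z => f₁ z + Fᶜ.indicator 1 z) x
        ≤ iniOp U f₁ x + iniOp U (Fᶜ.indicator 1) x := by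
      apply iSup₂_le
      intro β hβ
      have hadd : resOp U β (fun z => f₁ z + Fᶜ.indicator 1 z) x
          = resOp U β f₁ x + resOp U β (Fᶜ.indicator 1) x := lintegral_add_left hf₁m _
      rw [hadd]
      exact add_le_add (le_iSup₂_of_le β hβ le_rfl) (le_iSup₂_of_le β hβ le_rfl)
    have hzero : iniOp U (Fᶜ.indicator 1) x = 0 :=
      le_antisymm (iSup₂_le fun β hβ => (part1 β hβ x hx).le) zero_le
    -- iniOp U f₁ ≤ iniOp U g
    have hshift : ∀ j, itOp U α f₁ j = fun y => c * itOp U α g (j+1) y := by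
      intro j
      induction j with
      | zero => rfl
      | succ j ih =>
          have : itOp U α f₁ (j+1) = resOp U α (itOp U α f₁ j) := rfl
          rw [this, ih]
          funext y
          have : resOp U α (fun z => c * itOp U α g (j+1) z) y
              = c * resOp U α (itOp U α g (j+1)) y :=
            lintegral_const_mul _ (measurable_itOp hU hα hg (j+1))
          exact this
    have hiniOpf₁ : iniOp U f₁ x ≤ iniOp U g x := by
      rw [iniOp_eq_tsum hU hα hf₁m hf₁1 x]
      have h4 : ∀ k : ℕ, c ^ k * itOp U α f₁ (k+1) x = c ^ (k+1) * itOp U α g (k+2) x := by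
        intro k
        rw [hshift (k+1), pow_succ]
        ring
      calc ∑' k : ℕ, c ^ k * itOp U α f₁ (k+1) x
          = ∑' k : ℕ, c ^ (k+1) * itOp U α g (k+2) x := by
            congr 1; funext k; exact h4 k
        _ ≤ iniOp U g x := shifted_tsum_le hU hα hg hg1 x
    calc iniOp U (fun z => c * resOp U α g z * F.indicator 1 z + Fᶜ.indicator 1 z) x
        ≤ iniOp U f₁ x + iniOp U (Fᶜ.indicator 1) x := hmono.trans hsub
      _ = iniOp U f₁ x := by rw [hzero, add_zero]
      _ ≤ iniOp U g x := hiniOpf₁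


/-- STATEMENT 12 (Proposition A1, 5) ⇒ 3)): for `g ≤ 1` with `Ug > 0` everywhere and
`Ug ≤ 1` ξ-a.e., the set `F = [Ug < ∞]` satisfies `U_α(1_{E∖F}) = 0` on `F` for every
`α > 0`, hence `U(1_{E∖F}) = 0` on `F`, and `f = α U_α g · 1_F + 1_{E∖F}` is strictly
positive with `Uf ≤ Ug < ∞` on `F`. -/
theorem finiteness_set_absorbing
    (U : ℝ → ProbabilityTheory.Kernel E E) (hU : IsSubMarkovResolvent U)
    (ξ : Measure E) [SigmaFinite ξ]
    (g : E → ℝ≥0∞) (hg : Measurable g) (hg1 : ∀ x, g x ≤ 1)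
    (hpos : ∀ x, 0 < iniOp U g x) (hae : ∀ᵐ x ∂ξ, iniOp U g x ≤ 1)
    (α : ℝ) (hα : 0 < α) :
    (∀ α' : ℝ, 0 < α' → ∀ x ∈ {y | iniOp U g y < ⊤},
      resOp U α' ({y | iniOp U g y < ⊤}ᶜ.indicator 1) x = 0) ∧
    (∀ x ∈ {y | iniOp U g y < ⊤},
      iniOp U ({y | iniOp U g y < ⊤}ᶜ.indicator 1) x = 0) ∧
    (∀ x, 0 < ENNReal.ofReal α * resOp U α g x * {y | iniOp U g y < ⊤}.indicator 1 x
      + ({y | iniOp U g y < ⊤}ᶜ.indicator 1 x)) ∧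
    (∀ x ∈ {y | iniOp U g y < ⊤},
      iniOp U (fun z => ENNReal.ofReal α * resOp U α g z * {y | iniOp U g y < ⊤}.indicator 1 z
        + {y | iniOp U g y < ⊤}ᶜ.indicator 1 z) x ≤ iniOp U g x ∧ iniOp U g x < ⊤) :=
  finiteness_set_absorbing' U hU g hg hg1 hpos α hα
end
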